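/- arXiv:1201.5097 — 2 statements merged into one kernel-verified Lean document; each statement's English description precedes it below -/
import Mathlib

section
/- Let m = m(n) satisfy C·log log n ≤ m ≤ n - C·log n for a suitable absolute constant C, and set s₀ = 2·lg(m·log n). Then Σ_{s=1}^{⌈s₀⌉-1} C(m,s)·C(n-m,s)·C(n,m)^{2^{-s}-1} → 0 as n → ∞. -/
open Filter Real

lemma pow_div_le_choose : ∀ (k n : ℕ), k ≤ n → ((n:ℝ)/(k:ℝ))^k ≤ (n.choose k : ℝ) := by
  intro k
  induction k with
  | zero => intro n _; simp
  | succ k ih =>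
    intro n hkn
    obtain ⟨nn, rfl⟩ : ∃ nn, n = nn + 1 := ⟨n - 1, by omega⟩
    have hk : k ≤ nn := by omega
    have iden : ((nn+1).choose (k+1) : ℝ) * (k+1) = (nn+1) * (nn.choose k) := by
      have := Nat.add_one_mul_choose_eq nn k
      exact_mod_cast congrArg (Nat.cast : ℕ → ℝ) this.symm
    have key : (((nn:ℝ)+1)/((k:ℝ)+1))^k ≤ ((nn:ℝ)/(k:ℝ))^k := by
      rcases Nat.eq_zero_or_pos k with h0 | hpos
      · simp [h0]
      · have hkR : (1:ℝ) ≤ (k:ℝ) := by exact_mod_cast hpos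
        apply pow_le_pow_left₀ (by positivity)
        rw [div_le_div_iff₀ (by positivity) (by positivity)]
        have : (k:ℝ) ≤ (nn:ℝ) := by exact_mod_cast hk
        nlinarith
    have hbase : (0:ℝ) ≤ ((nn:ℝ)+1)/((k:ℝ)+1) := by positivity
    have step : (((nn:ℝ)+1)/((k:ℝ)+1))^(k+1) ≤ (((nn:ℝ)+1)/((k:ℝ)+1)) * (nn.choose k : ℝ) := by
      rw [pow_succ']
      exact mul_le_mul_of_nonneg_left (key.trans (ih nn hk)) hbase
    have heq : (((nn:ℝ)+1)/((k:ℝ)+1)) * (nn.choose k : ℝ) = ((nn+1).choose (k+1) : ℝ) := by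
      field_simp
      linarith [iden]
    push_cast
    rw [← heq] at *
    exact step

lemma log_le_two_sqrt {x : ℝ} (hx : 0 < x) : Real.log x ≤ 2 * Real.sqrt x := by
  have h1 : Real.log (Real.sqrt x) ≤ Real.sqrt x - 1 :=
    Real.log_le_sub_one_of_pos (Real.sqrt_pos.mpr hx)
  have h2 : Real.log (Real.sqrt x) = Real.log x / 2 := Real.log_sqrt hx.le
  linarith

lemma log_choose_lb (n k : ℕ) (hk : 1 ≤ k) (hkn : k ≤ n) :
    (k:ℝ) * Real.log ((n:ℝ)/(k:ℝ)) ≤ Real.log (n.choose k) := by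
  have h1 : ((n:ℝ)/(k:ℝ))^k ≤ (n.choose k : ℝ) := pow_div_le_choose k n hkn
  have hkpos : (0:ℝ) < k := by exact_mod_cast hk
  have hnpos : (0:ℝ) < n := by
    have : 1 ≤ n := hk.trans hkn; exact_mod_cast this
  calc (k:ℝ) * Real.log ((n:ℝ)/(k:ℝ)) = Real.log (((n:ℝ)/(k:ℝ))^k) :=
        (Real.log_pow ((n:ℝ)/(k:ℝ)) k).symm ▸ rfl
    _ ≤ Real.log (n.choose k) := Real.log_le_log (by positivity) h1

set_option maxHeartbeats 1000000 in
lemma sigma2_pointwise (n M : ℕ) (hLL : 400 ≤ Real.log (Real.log n))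
    (hm1 : 100 * Real.log (Real.log n) ≤ (M:ℝ))
    (hm2 : (M:ℝ) ≤ (n:ℝ) - 100 * Real.log n) :
    ∑ s ∈ Finset.Icc 1 ((⌈2 * Real.logb 2 ((M:ℝ) * Real.log n)⌉.toNat) - 1),
        (M.choose s : ℝ) * ((n - M).choose s : ℝ) *
          ((n.choose M : ℝ) ^ ((2:ℝ)^(-(s:ℝ)) - 1)) ≤ 1 / (n:ℝ) := by
  set L := Real.log n with hLdef
  set LL := Real.log L with hLLdef
  have hL0 : (0:ℝ) ≤ L := Real.log_natCast_nonneg n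
  have hLpos : 0 < L := by
    rcases hL0.lt_or_eq with h | h
    · exact h
    · exfalso; rw [hLLdef, ← h, Real.log_zero] at hLL; linarith
  have hLLpos : (0:ℝ) < LL := by linarith
  have hLbig : 40000 ≤ L := by
    have h1 : Real.exp (400:ℝ) = Real.exp 200 * Real.exp 200 := by
      rw [← Real.exp_add]; norm_num
    have h2 : (201:ℝ) ≤ Real.exp 200 := by
      have := Real.add_one_le_exp (200:ℝ); linarith
    have h2' : (201:ℝ) * 201 ≤ Real.exp 200 * Real.exp 200 :=
      mul_le_mul h2 h2 (by norm_num) (Real.exp_pos _).le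
    have h3 : Real.exp 400 ≤ Real.exp LL := Real.exp_le_exp.mpr hLL
    have h4 : Real.exp LL = L := by rw [hLLdef, Real.exp_log hLpos]
    linarith
  have hnpos : 0 < n := by
    rcases Nat.eq_zero_or_pos n with rfl | h
    · simp only [Nat.cast_zero, Real.log_zero] at hLdef
      rw [hLdef] at hLpos; linarith
    · exact h
  have hNpos : (0:ℝ) < (n:ℝ) := by exact_mod_cast hnpos
  have hN : (n:ℝ) = Real.exp L := by rw [hLdef, Real.exp_log hNpos]
  have hNbig : (40001:ℝ) ≤ (n:ℝ) := by
    have := Real.add_one_le_exp L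
    rw [← hN] at this; linarith
  have hmu1 : (40000:ℝ) ≤ (M:ℝ) := by linarith
  have hMltn : M < n := by
    have : (M:ℝ) < (n:ℝ) := by linarith
    exact_mod_cast this
  have hMpos : (0:ℝ) < (M:ℝ) := by linarith
  have hlogmupos : 0 < Real.log (M:ℝ) := Real.log_pos (by linarith)
  set s0 := 2 * Real.logb 2 ((M:ℝ) * L) with hs0def
  have hlog2 : (0.6931471803:ℝ) < Real.log 2 := Real.log_two_gt_d9
  have hs0eq : s0 = 2 * (Real.log (M:ℝ) + LL) / Real.log 2 := by
    rw [hs0def, Real.logb, Real.log_mul (by positivity) (ne_of_gt hLpos), hLLdef]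
    ring
  have hs0pos : 0 < s0 := by rw [hs0eq]; positivity
  have hs0le : s0 ≤ 3 * (Real.log (M:ℝ) + LL) := by
    rw [hs0eq, div_le_iff₀ (by linarith)]
    linarith [mul_nonneg (by linarith : (0:ℝ) ≤ Real.log (M:ℝ) + LL)
      (by linarith : (0:ℝ) ≤ 3 * Real.log 2 - 2)]
  -- key logarithmic inequality
  have hkey : Real.log s0 + 2 * s0 * L + L ≤ (1/2) * Real.log (n.choose M) := by
    have hlogs0 : Real.log s0 ≤ s0 := by
      have := Real.log_le_sub_one_of_pos hs0pos; linarith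
    have hLHS : Real.log s0 + 2*s0*L + L ≤ 3*s0*L + L := by
      linarith [mul_nonneg hs0pos.le (by linarith : (0:ℝ) ≤ L - 1)]
    rcases le_or_gt (Real.log (M:ℝ)) (L/2) with hcase | hcase
    · -- Case 1: m ≤ √n, use k = M
      have hM1 : 1 ≤ M := by exact_mod_cast (by linarith : (1:ℝ) ≤ (M:ℝ))
      have hlb := log_choose_lb n M hM1 hMltn.le
      have hlogdiv : Real.log ((n:ℝ)/(M:ℝ)) = L - Real.log (M:ℝ) := by
        rw [Real.log_div (ne_of_gt hNpos) (ne_of_gt hMpos), hLdef]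
      have hsq : (144:ℝ) ≤ Real.sqrt (M:ℝ) := by
        refine (Real.le_sqrt' (by norm_num)).mpr ?_
        linarith [hmu1]
      have hsqid : Real.sqrt (M:ℝ) * Real.sqrt (M:ℝ) = (M:ℝ) :=
        Real.mul_self_sqrt (by positivity)
      have h144 : 144 * Real.sqrt (M:ℝ) ≤ (M:ℝ) := by
        linarith [mul_nonneg (by linarith : (0:ℝ) ≤ Real.sqrt (M:ℝ) - 144)
          (Real.sqrt_nonneg (M:ℝ))]
      have h9A : 9 * Real.log (M:ℝ) ≤ (M:ℝ)/8 := by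
        have := log_le_two_sqrt hMpos
        linarith
      have h9B : 9 * LL + 1 ≤ (M:ℝ)/8 := by linarith
      have hmain : 3*s0 + 1 ≤ (M:ℝ)/4 := by linarith
      have hRHS : ((M:ℝ)/4) * L ≤ (1/2) * Real.log (n.choose M) := by
        have h1 : ((M:ℝ)/4)*L ≤ (1/2) * ((M:ℝ) * (L - Real.log (M:ℝ))) := by
          linarith [mul_nonneg hMpos.le (by linarith : (0:ℝ) ≤ L/2 - Real.log (M:ℝ))]
        have h2 : (M:ℝ) * (L - Real.log (M:ℝ)) ≤ Real.log (n.choose M) := by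
          rw [← hlogdiv]; exact hlb
        linarith
      have hml : (3*s0 + 1) * L ≤ ((M:ℝ)/4) * L :=
        mul_le_mul_of_nonneg_right hmain hL0
      linarith
    · -- Case 2: m > √n
      have hmugt : Real.exp (L/2) < (M:ℝ) := by
        have h := Real.exp_lt_exp.mpr hcase
        rwa [Real.exp_log hMpos] at h
      have hexpL2 : L^2/16 ≤ Real.exp (L/2) := by
        have h1 : Real.exp (L/2) = Real.exp (L/4) * Real.exp (L/4) := by
          rw [← Real.exp_add]; ring_nf
        have h2 : L/4 + 1 ≤ Real.exp (L/4) := Real.add_one_le_exp _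
        have h2' : (L/4+1) * (L/4+1) ≤ Real.exp (L/4) * Real.exp (L/4) :=
          mul_le_mul h2 h2 (by linarith) (Real.exp_pos _).le
        linarith
      have hmu100L : 100 * L ≤ (M:ℝ) := by
        linarith [mul_nonneg hL0 (by linarith : (0:ℝ) ≤ L - 1600)]
      set k := min M (n - M) with hkdef
      have hk1 : 1 ≤ k := by
        have h1 : 1 ≤ M := by exact_mod_cast (by linarith : (1:ℝ) ≤ (M:ℝ))
        omega
      have hkn : k ≤ n := by omega
      have hksub : ((n - M : ℕ):ℝ) = (n:ℝ) - (M:ℝ) := Nat.cast_sub hMltn.le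
      have hkappa : (k:ℝ) = min (M:ℝ) ((n:ℝ) - (M:ℝ)) := by
        rw [hkdef, Nat.cast_min, hksub]
      have hchoosek : n.choose k = n.choose M := by
        rcases le_total M (n - M) with h | h
        · rw [hkdef, min_eq_left h]
        · rw [hkdef, min_eq_right h, Nat.choose_symm hMltn.le]
      have hk100L : 100 * L ≤ (k:ℝ) := by
        rw [hkappa]; exact le_min hmu100L (by linarith)
      have hkpos : (0:ℝ) < (k:ℝ) := by linarith
      have hkhalf : (k:ℝ) ≤ (n:ℝ)/2 := by
        rw [hkappa]
        rcases le_total (M:ℝ) ((n:ℝ) - (M:ℝ)) with h | h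
        · rw [min_eq_left h]; linarith
        · rw [min_eq_right h]; linarith
      have hlb := log_choose_lb n k hk1 hkn
      rw [hchoosek] at hlb
      have hlogdivk : Real.log ((n:ℝ)/(k:ℝ)) = L - Real.log (k:ℝ) := by
        rw [Real.log_div (ne_of_gt hNpos) (ne_of_gt hkpos), hLdef]
      have hlogmuleL : Real.log (M:ℝ) ≤ L := by
        rw [hLdef]; exact Real.log_le_log hMpos (by linarith)
      have hsqL : (200:ℝ) ≤ Real.sqrt L := by
        refine (Real.le_sqrt' (by norm_num)).mpr ?_
        linarith [hLbig]
      have hsqLid : Real.sqrt L * Real.sqrt L = L := Real.mul_self_sqrt hL0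
      have h200L : 200 * Real.sqrt L ≤ L := by
        linarith [mul_nonneg (by linarith : (0:ℝ) ≤ Real.sqrt L - 200)
          (Real.sqrt_nonneg L)]
      have hLLsmall : LL ≤ L/100 := by
        have h1 := log_le_two_sqrt hLpos
        rw [← hLLdef] at h1
        linarith
      have hs0L : s0 ≤ 3.03 * L := by linarith
      have hLHS2 : 3*s0*L + L ≤ 9.1 * L^2 := by
        linarith [mul_le_mul_of_nonneg_right hs0L hL0,
          mul_nonneg hL0 (by linarith : (0:ℝ) ≤ L - 100)]
      rcases le_or_gt (Real.log (k:ℝ)) (3*L/4) with hsub | hsub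
      · have hsub' : L/4 ≤ L - Real.log (k:ℝ) := by linarith
        have hprod : (100*L) * (L/4) ≤ (k:ℝ) * (L - Real.log (k:ℝ)) :=
          mul_le_mul hk100L hsub' (by linarith) (by linarith)
        have h2 : (k:ℝ) * (L - Real.log (k:ℝ)) ≤ Real.log (n.choose M) := by
          rw [← hlogdivk]; exact hlb
        linarith [sq_nonneg L]
      · have hkbig : L^3/64 ≤ (k:ℝ) := by
          have h1 : Real.exp (3*L/4) < (k:ℝ) := by
            have h := Real.exp_lt_exp.mpr hsub
            rwa [Real.exp_log hkpos] at h
          have h2 : Real.exp (3*L/4) = Real.exp (L/4) * Real.exp (L/4) * Real.exp (L/4) := by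
            rw [← Real.exp_add, ← Real.exp_add]; ring_nf
          have h3 : L/4 + 1 ≤ Real.exp (L/4) := Real.add_one_le_exp _
          have h5 : (L/4)^3 ≤ (Real.exp (L/4))^3 :=
            pow_le_pow_left₀ (by linarith) (by linarith) 3
          linarith
        have hlogdiv2 : (1/2:ℝ) ≤ Real.log ((n:ℝ)/(k:ℝ)) := by
          have h2 : (2:ℝ) ≤ (n:ℝ)/(k:ℝ) := (le_div_iff₀ hkpos).mpr (by linarith)
          have := Real.log_le_log (by norm_num : (0:ℝ) < 2) h2
          linarith
        have hprod : (L^3/64) * (1/2) ≤ (k:ℝ) * Real.log ((n:ℝ)/(k:ℝ)) :=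
          mul_le_mul hkbig hlogdiv2 (by norm_num) (by linarith)
        linarith [mul_nonneg (mul_nonneg hL0 hL0) (by linarith : (0:ℝ) ≤ L - 2330), sq_nonneg L]
  -- Step 1: bound the sum
  set C := (n.choose M : ℝ) with hCdef
  have hC1 : (1:ℝ) ≤ C := by
    rw [hCdef]; exact_mod_cast Nat.one_le_iff_ne_zero.mpr (Nat.choose_pos hMltn.le).ne'
  have hCpos : (0:ℝ) < C := by linarith
  set S := (⌈s0⌉.toNat) - 1 with hSdef
  have hN1 : (1:ℝ) ≤ (n:ℝ) := by linarith
  have hterm : ∀ s ∈ Finset.Icc 1 S,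
      (M.choose s : ℝ) * ((n - M).choose s : ℝ) * (C ^ ((2:ℝ)^(-(s:ℝ)) - 1))
        ≤ (n:ℝ)^(2*S) * C ^ (-(1/2):ℝ) := by
    intro s hs
    obtain ⟨hs1, hs2⟩ := Finset.mem_Icc.mp hs
    have hc1 : (M.choose s : ℝ) ≤ (n:ℝ)^s := by
      exact_mod_cast (Nat.choose_le_pow M s).trans (Nat.pow_le_pow_left hMltn.le s)
    have hc2 : ((n - M).choose s : ℝ) ≤ (n:ℝ)^s := by
      exact_mod_cast (Nat.choose_le_pow (n - M) s).trans (Nat.pow_le_pow_left (Nat.sub_le n M) s)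
    have hexp : (2:ℝ)^(-(s:ℝ)) - 1 ≤ -(1/2:ℝ) := by
      have hs1R : (1:ℝ) ≤ (s:ℝ) := by exact_mod_cast hs1
      have h1 : (2:ℝ)^(-(s:ℝ)) ≤ (2:ℝ)^(-1:ℝ) :=
        Real.rpow_le_rpow_of_exponent_le one_le_two (by linarith)
      rw [Real.rpow_neg_one] at h1
      norm_num at h1 ⊢
      linarith
    have hc3 : C ^ ((2:ℝ)^(-(s:ℝ)) - 1) ≤ C ^ (-(1/2):ℝ) :=
      Real.rpow_le_rpow_of_exponent_le hC1 hexp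
    calc (M.choose s : ℝ) * ((n - M).choose s : ℝ) * (C ^ ((2:ℝ)^(-(s:ℝ)) - 1))
        ≤ (n:ℝ)^s * (n:ℝ)^s * C ^ (-(1/2):ℝ) := by
          apply mul_le_mul (mul_le_mul hc1 hc2 (by positivity) (by positivity)) hc3
            (by positivity) (by positivity)
      _ = (n:ℝ)^(s+s) * C ^ (-(1/2):ℝ) := by rw [pow_add]
      _ ≤ (n:ℝ)^(2*S) * C ^ (-(1/2):ℝ) := by
          apply mul_le_mul_of_nonneg_right (pow_le_pow_right₀ hN1 (by omega)) (by positivity)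
  have hsum : (∑ s ∈ Finset.Icc 1 S,
      (M.choose s : ℝ) * ((n - M).choose s : ℝ) * (C ^ ((2:ℝ)^(-(s:ℝ)) - 1)))
        ≤ (S:ℝ) * ((n:ℝ)^(2*S) * C ^ (-(1/2):ℝ)) := by
    have h := Finset.sum_le_card_nsmul (Finset.Icc 1 S) _ _ hterm
    rw [Nat.card_Icc] at h
    simpa [nsmul_eq_mul] using h
  have hSle : (S:ℝ) ≤ s0 := by
    have hceil : ((⌈s0⌉:ℤ):ℝ) ≤ s0 + 1 := by linarith [Int.ceil_lt_add_one s0]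
    rcases Nat.eq_zero_or_pos (⌈s0⌉.toNat) with h0 | hpos
    · rw [hSdef, h0]; simpa using hs0pos.le
    · have hc : ((⌈s0⌉.toNat : ℕ):ℝ) = ((⌈s0⌉:ℤ):ℝ) := by
        exact_mod_cast Int.toNat_of_nonneg (Int.ceil_nonneg hs0pos.le)
      rw [hSdef, Nat.cast_sub hpos]
      rw [hc]
      push_cast
      linarith
  have hpowle : ((n:ℝ))^(2*S) ≤ (n:ℝ) ^ ((2*s0:ℝ)) := by
    rw [← Real.rpow_natCast (n:ℝ) (2*S)]
    apply Real.rpow_le_rpow_of_exponent_le hN1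
    push_cast
    linarith
  have hsum2 : (∑ s ∈ Finset.Icc 1 S,
      (M.choose s : ℝ) * ((n - M).choose s : ℝ) * (C ^ ((2:ℝ)^(-(s:ℝ)) - 1)))
        ≤ s0 * ((n:ℝ) ^ (2*s0:ℝ) * C ^ (-(1/2):ℝ)) := by
    refine hsum.trans ?_
    apply mul_le_mul hSle (mul_le_mul_of_nonneg_right hpowle (by positivity))
      (by positivity) hs0pos.le
  set E := s0 * ((n:ℝ) ^ (2*s0:ℝ) * C ^ (-(1/2):ℝ)) with hEdef
  have hEpos : 0 < E := by
    exact mul_pos hs0pos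
      (mul_pos (Real.rpow_pos_of_pos hNpos _) (Real.rpow_pos_of_pos hCpos _))
  have hElog : Real.log E = Real.log s0 + 2*s0*L + (-(1/2)) * Real.log C := by
    rw [hEdef, Real.log_mul (ne_of_gt hs0pos)
        (ne_of_gt (mul_pos (Real.rpow_pos_of_pos hNpos _) (Real.rpow_pos_of_pos hCpos _))),
      Real.log_mul (ne_of_gt (Real.rpow_pos_of_pos hNpos _))
        (ne_of_gt (Real.rpow_pos_of_pos hCpos _)),
      Real.log_rpow hNpos, Real.log_rpow hCpos, ← hLdef]
    ring
  have hfinal : E ≤ 1/(n:ℝ) := by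
    have h1 : Real.log E ≤ Real.log (1/(n:ℝ)) := by
      rw [hElog, Real.log_div one_ne_zero (ne_of_gt hNpos), Real.log_one, ← hLdef]
      linarith [hkey]
    calc E = Real.exp (Real.log E) := (Real.exp_log hEpos).symm
      _ ≤ Real.exp (Real.log (1/(n:ℝ))) := Real.exp_le_exp.mpr h1
      _ = 1/(n:ℝ) := Real.exp_log (by positivity)
  exact hsum2.trans hfinal

theorem sigma2_tendsto_zero :
    ∃ C : ℝ, 0 < C ∧ ∀ m : ℕ → ℕ,
      (∀ᶠ n : ℕ in atTop,
          C * Real.log (Real.log n) ≤ (m n : ℝ) ∧ (m n : ℝ) ≤ (n : ℝ) - C * Real.log n) →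
      Tendsto
        (fun n : ℕ =>
          ∑ s ∈ Finset.Icc 1 ((⌈2 * Real.logb 2 ((m n : ℝ) * Real.log n)⌉.toNat) - 1),
            ((m n).choose s : ℝ) * ((n - m n).choose s : ℝ) *
              ((n.choose (m n) : ℝ) ^ ((2 : ℝ) ^ (-(s : ℝ)) - 1)))
        atTop (nhds 0) := by
  refine ⟨100, by norm_num, ?_⟩
  intro m hm
  have hev : ∀ᶠ n : ℕ in atTop, 400 ≤ Real.log (Real.log n) :=
    (Real.tendsto_log_atTop.comp
      (Real.tendsto_log_atTop.comp tendsto_natCast_atTop_atTop)).eventually_ge_atTop 400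
  have hub : ∀ᶠ n : ℕ in atTop,
      (∑ s ∈ Finset.Icc 1 ((⌈2 * Real.logb 2 ((m n : ℝ) * Real.log n)⌉.toNat) - 1),
        ((m n).choose s : ℝ) * ((n - m n).choose s : ℝ) *
          ((n.choose (m n) : ℝ) ^ ((2 : ℝ) ^ (-(s : ℝ)) - 1))) ≤ 1 / (n:ℝ) := by
    filter_upwards [hm, hev] with n hmn hn400
    exact sigma2_pointwise n (m n) hn400 hmn.1 hmn.2
  have hlb : ∀ᶠ n : ℕ in atTop,
      (0:ℝ) ≤ ∑ s ∈ Finset.Icc 1 ((⌈2 * Real.logb 2 ((m n : ℝ) * Real.log n)⌉.toNat) - 1),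
        ((m n).choose s : ℝ) * ((n - m n).choose s : ℝ) *
          ((n.choose (m n) : ℝ) ^ ((2 : ℝ) ^ (-(s : ℝ)) - 1)) := by
    filter_upwards with n
    apply Finset.sum_nonneg
    intro s _
    positivity
  exact tendsto_of_tendsto_of_tendsto_of_le_of_le' tendsto_const_nhds
    tendsto_one_div_atTop_nhds_zero_nat hlb hub
end

section
/- Fix 0 < β < 1 and let p = 2^{-βn}, δ = β^{-β}(1-β)^{-(1-β)}. With m = (1-β)n - φ(n) where φ(n) = lg(n ln δ) + ω(n)·o(1) appropriately chosen (and φ(n) ≤ lg n), the expected number of m-element hitting sets satisfies E[X_m] ≤ C(n,m)·exp(-2^{φ(n)}) → 0 as n → ∞. -/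
open MeasureTheory Filter Real
open scoped ENNReal

/-- The random set system `R(n,p)`: each subset of `[n]` is selected
independently with probability `p`. -/
noncomputable def Rnp (n : ℕ) (p : ℝ) : Measure (Finset (Fin n) → Bool) :=
  Measure.pi fun _ => (PMF.bernoulli (min (Real.toNNReal p) 1) (min_le_right _ _)).toMeasure

/-- `S` is a hitting set for the selected family `ω`. -/
def Hits {n : ℕ} (S : Finset (Fin n)) (ω : Finset (Fin n) → Bool) : Prop :=
  ∀ A : Finset (Fin n), ω A = true → A.Nonempty → (A ∩ S).Nonempty

/-- The minimum size of a hitting set. -/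
noncomputable def hitNum {n : ℕ} (ω : Finset (Fin n) → Bool) : ℕ :=
  sInf {k | ∃ S : Finset (Fin n), S.card = k ∧ Hits S ω}


/-- `numHitting n m ω` is the number of `m`-element hitting sets. -/
noncomputable def numHitting (n m : ℕ) (ω : Finset (Fin n) → Bool) : ℕ :=
  {S : Finset (Fin n) | S.card = m ∧ Hits S ω}.ncard

/- ### Auxiliary lemmas -/

lemma DFM.aux1 {p : ℝ} (h0 : 0 ≤ p) (h1 : p ≤ 1) : (1 - p) * Real.exp p ≤ 1 - p^2/2 := by
  have hb := Real.exp_bound (x := p) (by rw [abs_of_nonneg h0]; exact h1) (n := 3) (by norm_num)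
  rw [abs_of_nonneg h0] at hb
  have hexp : Real.exp p ≤ 1 + p + p^2/2 + p^3 * (4/18) := by
    have := abs_le.1 hb
    simp [Finset.sum_range_succ, Nat.factorial] at this ⊢
    nlinarith [this.2]
  nlinarith [Real.exp_pos p]

lemma DFM.one_sub_le_exp_quad {p : ℝ} (h0 : 0 ≤ p) (h1 : p ≤ 1) :
    1 - p ≤ Real.exp (-(p + p^2/2)) := by
  have h2 : (1 - p) * Real.exp p * Real.exp (p^2/2) ≤ (1 - p^2/2) * Real.exp (p^2/2) :=
    mul_le_mul_of_nonneg_right (DFM.aux1 h0 h1) (Real.exp_pos _).le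
  have h3 : (1 - p^2/2) * Real.exp (p^2/2) ≤ 1 := by
    have hx := Real.add_one_le_exp (-(p^2/2))
    rw [Real.exp_neg] at hx
    have := mul_le_mul_of_nonneg_right (by linarith : (1 - p^2/2) ≤ (Real.exp (p^2/2))⁻¹)
      (Real.exp_pos (p^2/2)).le
    rwa [inv_mul_cancel₀ (Real.exp_pos _).ne'] at this
  have h4 : (1 - p) * Real.exp (p + p^2/2) ≤ 1 := by
    rw [Real.exp_add]; nlinarith
  rw [Real.exp_neg, ← one_div, le_div_iff₀ (Real.exp_pos _)]
  exact h4

lemma DFM.binom_bound {n m : ℕ} (hm : m ≤ n) {x y : ℝ} (hx : 0 ≤ x) (hy : 0 ≤ y) :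
    (n.choose m : ℝ) * x^m * y^(n-m) ≤ (x+y)^n := by
  rw [add_pow]
  have hmem : m ∈ Finset.range (n+1) := Finset.mem_range.2 (Nat.lt_succ_of_le hm)
  calc (n.choose m : ℝ) * x^m * y^(n-m) = x^m * y^(n-m) * (n.choose m : ℝ) := by ring
  _ ≤ ∑ k ∈ Finset.range (n+1), x^k * y^(n-k) * (n.choose k : ℝ) := by
      apply Finset.single_le_sum (fun k _ => by positivity) hmem

lemma DFM.card_bad {n : ℕ} (S : Finset (Fin n)) :
    (Finset.univ.filter (fun A : Finset (Fin n) => A.Nonempty ∧ A ∩ S = ∅)).card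
      = 2^(n - S.card) - 1 := by
  classical
  have : Finset.univ.filter (fun A : Finset (Fin n) => A.Nonempty ∧ A ∩ S = ∅)
      = Sᶜ.powerset.erase ∅ := by
    ext A
    simp only [Finset.mem_filter, Finset.mem_univ, true_and, Finset.mem_erase,
      Finset.mem_powerset, Finset.nonempty_iff_ne_empty, and_comm,
      ← Finset.disjoint_iff_inter_eq_empty, ← le_compl_iff_disjoint_right, Finset.le_iff_subset]
  rw [this, Finset.card_erase_of_mem (Finset.empty_mem_powerset _), Finset.card_powerset,
    Finset.card_compl, Fintype.card_fin]

lemma DFM.meas_all {n : ℕ} (s : Set (Finset (Fin n) → Bool)) : MeasurableSet s :=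
  s.toFinite.measurableSet

lemma DFM.hits_prob_le {n : ℕ} (p : ℝ) (hp0 : 0 ≤ p) (hp1 : p ≤ 1) (S : Finset (Fin n)) :
    Rnp n p {ω | Hits S ω} ≤ ENNReal.ofReal (1-p) ^ (2^(n - S.card) - 1) := by
  classical
  set P : Finset (Fin n) → Prop := fun A => A.Nonempty ∧ A ∩ S = ∅ with hP
  set t : Finset (Fin n) → Set Bool := fun A => if P A then {false} else Set.univ with ht
  have hsub : {ω | Hits S ω} ⊆ Set.univ.pi t := by
    intro ω hω A _
    by_cases hA : P A
    · simp only [ht, if_pos hA]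
      cases hωA : ω A with
      | false => rfl
      | true => exact absurd (hω A hωA hA.1) (by simp [hA.2, Finset.not_nonempty_empty])
    · simp [ht, if_neg hA]
  refine (measure_mono hsub).trans_eq ?_
  rw [Rnp, Measure.pi_pi]
  have hq : min (Real.toNNReal p) 1 = Real.toNNReal p :=
    min_eq_left (Real.toNNReal_le_one.2 hp1)
  have hfalse : ((PMF.bernoulli (min (Real.toNNReal p) 1) (min_le_right _ _)).toMeasure :
      Measure Bool) {false} = ENNReal.ofReal (1-p) := by
    rw [PMF.toMeasure_apply_singleton _ _ (measurableSet_singleton _), PMF.bernoulli_apply, hq]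
    simp only [Bool.cond_false]
    rw [ENNReal.coe_sub, ENNReal.coe_one]
    change 1 - ENNReal.ofReal p = _
    rw [ENNReal.ofReal_sub _ hp0, ENNReal.ofReal_one]
  calc ∏ A : Finset (Fin n),
      (PMF.bernoulli (min (Real.toNNReal p) 1) (min_le_right _ _)).toMeasure (t A)
      = ∏ A : Finset (Fin n), (if P A then ENNReal.ofReal (1-p) else 1) := by
        apply Finset.prod_congr rfl
        intro A _
        by_cases hA : P A
        · rw [ht]; simp only [if_pos hA]; exact hfalse
        · rw [ht]; simp only [if_neg hA]; exact measure_univ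
    _ = ENNReal.ofReal (1-p) ^ (Finset.univ.filter P).card := by
        rw [← Finset.prod_filter, Finset.prod_const]
    _ = ENNReal.ofReal (1-p) ^ (2^(n - S.card) - 1) := by rw [DFM.card_bad]

lemma DFM.expectation_le {n m : ℕ} (p : ℝ) (hp0 : 0 ≤ p) (hp1 : p ≤ 1) :
    ∫⁻ ω, (numHitting n m ω : ℝ≥0∞) ∂(Rnp n p)
      ≤ (n.choose m : ℝ≥0∞) * ENNReal.ofReal (1-p) ^ (2^(n-m) - 1) := by
  classical
  have hcount : ∀ ω, (numHitting n m ω : ℝ≥0∞)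
      = ∑ S ∈ Finset.univ.filter (fun S : Finset (Fin n) => S.card = m),
          (if Hits S ω then (1:ℝ≥0∞) else 0) := by
    intro ω
    have h1 : {S : Finset (Fin n) | S.card = m ∧ Hits S ω}
        = ↑(Finset.univ.filter (fun S : Finset (Fin n) => S.card = m ∧ Hits S ω)) := by
      ext S; simp
    rw [numHitting, h1, Set.ncard_coe_finset, Finset.card_filter, Finset.sum_filter]
    push_cast
    apply Finset.sum_congr rfl
    intro S _
    by_cases h : S.card = m <;> by_cases h2 : Hits S ω <;> simp [h, h2]
  calc ∫⁻ ω, (numHitting n m ω : ℝ≥0∞) ∂(Rnp n p)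
      = ∑ S ∈ Finset.univ.filter (fun S : Finset (Fin n) => S.card = m),
          ∫⁻ ω, (if Hits S ω then (1:ℝ≥0∞) else 0) ∂(Rnp n p) := by
        rw [← MeasureTheory.lintegral_finset_sum _ (fun S _ => fun t _ => DFM.meas_all _)]
        exact lintegral_congr fun ω => hcount ω
    _ = ∑ S ∈ Finset.univ.filter (fun S : Finset (Fin n) => S.card = m),
          Rnp n p {ω | Hits S ω} := by
        apply Finset.sum_congr rfl
        intro S _
        rw [← MeasureTheory.lintegral_indicator_one (DFM.meas_all {ω | Hits S ω})]
        apply lintegral_congr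
        intro ω
        simp [Set.indicator_apply]
    _ ≤ ∑ S ∈ Finset.univ.filter (fun S : Finset (Fin n) => S.card = m),
          ENNReal.ofReal (1-p) ^ (2^(n-m) - 1) := by
        apply Finset.sum_le_sum
        intro S hS
        have hSc : S.card = m := (Finset.mem_filter.1 hS).2
        simpa [hSc] using DFM.hits_prob_le p hp0 hp1 S
    _ = (n.choose m : ℝ≥0∞) * ENNReal.ofReal (1-p) ^ (2^(n-m) - 1) := by
        rw [Finset.sum_const, nsmul_eq_mul]
        congr 1
        have : Finset.univ.filter (fun S : Finset (Fin n) => S.card = m)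
            = Finset.powersetCard m Finset.univ := by
          ext S; simp [Finset.mem_powersetCard]
        rw [this, Finset.card_powersetCard, Finset.card_univ, Fintype.card_fin]

lemma DFM.neg_mul_log_le {x : ℝ} (h0 : 0 < x) (h1 : x < 1) : -(x * Real.log x) ≤ 3/8 := by
  have hinv : Real.log x = -Real.log x⁻¹ := by rw [Real.log_inv]; ring
  have hle : Real.log x⁻¹ ≤ x⁻¹ / Real.exp 1 := by
    have h := Real.log_le_sub_one_of_pos (x := x⁻¹ / Real.exp 1) (by positivity)
    rw [Real.log_div (by positivity) (Real.exp_pos 1).ne', Real.log_exp] at h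
    linarith
  have hx : -(x * Real.log x) = x * Real.log x⁻¹ := by rw [hinv]; ring
  rw [hx]
  have h2 : x * Real.log x⁻¹ ≤ x * (x⁻¹ / Real.exp 1) :=
    mul_le_mul_of_nonneg_left hle h0.le
  have h3 : x * (x⁻¹ / Real.exp 1) = 1 / Real.exp 1 := by
    field_simp
  have h4 : 1 / Real.exp 1 ≤ 3/8 := by
    rw [div_le_iff₀ (Real.exp_pos 1)]
    nlinarith [Real.exp_one_gt_d9]
  linarith [h2, h3.le]

lemma DFM.sqrt_atTop : Tendsto Real.sqrt atTop atTop := by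
  refine tendsto_atTop_atTop.2 fun b => ⟨(max b 0)^2, fun a ha => ?_⟩
  calc b ≤ max b 0 := le_max_left _ _
    _ = Real.sqrt ((max b 0)^2) := (Real.sqrt_sq (le_max_right _ _)).symm
    _ ≤ Real.sqrt a := Real.sqrt_le_sqrt ha

lemma DFM.sqrtN_atTop : Tendsto (fun n : ℕ => Real.sqrt n) atTop atTop :=
  DFM.sqrt_atTop.comp tendsto_natCast_atTop_atTop

lemma DFM.sqrtsqrtN_atTop : Tendsto (fun n : ℕ => Real.sqrt (Real.sqrt n)) atTop atTop :=
  DFM.sqrt_atTop.comp DFM.sqrtN_atTop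

set_option maxHeartbeats 2000000 in
/-- Dense case first moment bound: for `p = 2^{-βn}` and a suitable
`φ(n) = lg(n ln δ) + o(1)` with `φ(n) ≤ lg n`, taking `m = (1-β)n - φ(n)`, the
expected number of `m`-element hitting sets is at most `C(n,m)·exp(-2^{φ(n)}) → 0`. -/
theorem dense_first_moment (β : ℝ) (hβ0 : 0 < β) (hβ1 : β < 1) :
    ∃ φ : ℕ → ℝ,
      Tendsto (fun n : ℕ =>
          φ n - Real.logb 2 ((n : ℝ) * Real.log (β ^ (-β) * (1 - β) ^ (-(1 - β)))))
        atTop (nhds 0) ∧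
      (∀ᶠ n : ℕ in atTop, φ n ≤ Real.logb 2 n) ∧
      (∀ᶠ n : ℕ in atTop,
        ∫⁻ ω, (numHitting n ((⌊(1 - β) * n - φ n⌋).toNat) ω : ℝ≥0∞)
            ∂(Rnp n ((2 : ℝ) ^ (-(β * n)))) ≤
          ENNReal.ofReal ((n.choose ((⌊(1 - β) * n - φ n⌋).toNat) : ℝ) *
            Real.exp (-(2 : ℝ) ^ (φ n)))) ∧
      Tendsto (fun n : ℕ =>
          (n.choose ((⌊(1 - β) * n - φ n⌋).toNat) : ℝ) * Real.exp (-(2 : ℝ) ^ (φ n)))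
        atTop (nhds 0) := by
  classical
  have hβ' : (0:ℝ) < 1 - β := by linarith
  obtain ⟨L, hLdef⟩ : ∃ L : ℝ, L = Real.log (β ^ (-β) * (1 - β) ^ (-(1 - β))) := ⟨_, rfl⟩
  have hlogβ : Real.log β < 0 := Real.log_neg hβ0 hβ1
  have hlogβ' : Real.log (1-β) < 0 := Real.log_neg hβ' (by linarith)
  have hLval : L = -(β * Real.log β) + -((1-β) * Real.log (1-β)) := by
    rw [hLdef, Real.log_mul (by positivity) (by positivity),
      Real.log_rpow hβ0, Real.log_rpow hβ']
    ring
  have hL0 : 0 < L := by rw [hLval]; nlinarith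
  have hL34 : L ≤ 3/4 := by
    have h1 := DFM.neg_mul_log_le hβ0 hβ1
    have h2 := DFM.neg_mul_log_le hβ' (by linarith)
    rw [hLval]; nlinarith
  have hlog2 : (0:ℝ) < Real.log 2 := Real.log_pos one_lt_two
  obtain ⟨φ, hφdef⟩ : ∃ φ : ℕ → ℝ, φ = fun n : ℕ => Real.logb 2 ((n:ℝ) * L + Real.sqrt (n:ℝ)) :=
    ⟨_, rfl⟩
  -- eventual basic facts
  obtain ⟨R, hRdef⟩ : ∃ R : ℝ, R = |Real.log ((1-β)/β)| := ⟨_, rfl⟩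
  have hθ : ∀ᶠ n : ℕ in atTop, (4:ℝ) ≤ Real.sqrt n ∧
      2 / ((1-β) * Real.log 2) ≤ Real.sqrt n ∧ (1:ℝ) ≤ n ∧
      max 1 (2*(4/Real.log 2 + 1)*R) ≤ Real.sqrt (Real.sqrt n) := by
    filter_upwards [DFM.sqrtN_atTop.eventually_ge_atTop 4,
      DFM.sqrtN_atTop.eventually_ge_atTop (2 / ((1-β) * Real.log 2)),
      tendsto_natCast_atTop_atTop.eventually_ge_atTop (1:ℝ),
      DFM.sqrtsqrtN_atTop.eventually_ge_atTop (max 1 (2*(4/Real.log 2 + 1)*R))] with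
      n h1 h2 h3 h4
    exact ⟨h1, h2, h3, h4⟩
  -- basic consequences for good n
  have key : ∀ n : ℕ, (4:ℝ) ≤ Real.sqrt n → 2 / ((1-β) * Real.log 2) ≤ Real.sqrt n →
      (1:ℝ) ≤ n →
      0 < (n:ℝ) * L + Real.sqrt n ∧
      (2:ℝ) ^ (φ n) = (n:ℝ) * L + Real.sqrt n ∧
      0 ≤ φ n ∧ φ n ≤ Real.logb 2 n ∧ φ n ≤ (1-β) * n ∧
      0 ≤ (1-β) * n - φ n := by
    intro n h4 h2c h1n
    have hφn : φ n = Real.logb 2 ((n:ℝ) * L + Real.sqrt n) := by rw [hφdef]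
    have hn0 : (0:ℝ) < n := by linarith
    have hsq : Real.sqrt n * Real.sqrt n = (n:ℝ) := Real.mul_self_sqrt hn0.le
    have hsqnn : (0:ℝ) ≤ Real.sqrt n := Real.sqrt_nonneg _
    have harg : 0 < (n:ℝ) * L + Real.sqrt n := by nlinarith
    have hT : (2:ℝ) ^ (φ n) = (n:ℝ) * L + Real.sqrt n := by
      rw [hφn]; exact Real.rpow_logb (by norm_num) (by norm_num) harg
    have hφ0 : 0 ≤ φ n := by
      rw [hφn]; exact Real.logb_nonneg one_lt_two (by nlinarith)
    have hφle : φ n ≤ Real.logb 2 n := by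
      rw [hφn]
      apply Real.logb_le_logb_of_le one_lt_two harg
      nlinarith
    have hlogb : Real.logb 2 n ≤ (1-β) * n := by
      rw [Real.logb, div_le_iff₀ hlog2]
      have hlogn : Real.log n ≤ 2 * Real.sqrt n := by
        have := Real.log_le_sub_one_of_pos (x := Real.sqrt n) (by nlinarith)
        have hls : Real.log (Real.sqrt n) = Real.log n / 2 := Real.log_sqrt hn0.le
        linarith [hls ▸ this]
      have : 2 ≤ (1-β) * Real.log 2 * Real.sqrt n := by
        rw [div_le_iff₀ (by positivity)] at h2c
        linarith
      nlinarith
    exact ⟨harg, hT, hφ0, hφle, hφle.trans hlogb, by linarith [hφle.trans hlogb]⟩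
  refine ⟨φ, ?_, ?_, ?_, ?_⟩
  · -- condition 1
    rw [show (fun n : ℕ => φ n - Real.logb 2 ((n : ℝ) *
        Real.log (β ^ (-β) * (1 - β) ^ (-(1 - β)))))
        = fun n : ℕ => φ n - Real.logb 2 ((n : ℝ) * L) by rw [hLdef]]
    refine squeeze_zero' (g := fun n : ℕ => 1 / (L * Real.log 2) * (1 / Real.sqrt n)) ?_ ?_ ?_
    · filter_upwards [hθ] with n hn
      obtain ⟨_, hT, _, _, _, _⟩ := key n hn.1 hn.2.1 hn.2.2.1
      have hn0 : (0:ℝ) < n := by linarith [hn.2.2.1]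
      have hargpos : 0 < (n:ℝ) * L + Real.sqrt n := by positivity
      have hnL : 0 < (n:ℝ) * L := by positivity
      have : Real.logb 2 ((n:ℝ) * L) ≤ φ n := by
        rw [hφdef]
        exact Real.logb_le_logb_of_le one_lt_two hnL
          (le_add_of_nonneg_right (Real.sqrt_nonneg _))
      linarith
    · filter_upwards [hθ] with n hn
      have hn0 : (0:ℝ) < n := by linarith [hn.2.2.1]
      have hsq : Real.sqrt n * Real.sqrt n = (n:ℝ) := Real.mul_self_sqrt hn0.le
      have hsqpos : (0:ℝ) < Real.sqrt n := by nlinarith [hn.1]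
      have hnL : 0 < (n:ℝ) * L := by positivity
      have hargpos : 0 < (n:ℝ) * L + Real.sqrt n := by positivity
      have hfrac : ((n:ℝ) * L + Real.sqrt n) / ((n:ℝ) * L) = 1 + 1 / (Real.sqrt n * L) := by
        field_simp
        linear_combination hsq
      have hdiff : φ n - Real.logb 2 ((n:ℝ) * L)
          = Real.logb 2 (1 + 1/(Real.sqrt n * L)) := by
        simp only [hφdef]
        rw [← Real.logb_div hargpos.ne' hnL.ne', hfrac]
      rw [hdiff, Real.logb, div_le_iff₀ hlog2]
      have hzpos : (0:ℝ) < 1 + 1/(Real.sqrt n * L) := by positivity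
      have hlog_le : Real.log (1 + 1/(Real.sqrt n * L)) ≤ 1/(Real.sqrt n * L) := by
        have := Real.log_le_sub_one_of_pos hzpos
        linarith
      have heq : 1 / (L * Real.log 2) * (1 / Real.sqrt n) * Real.log 2
          = 1 / (Real.sqrt n * L) := by
        field_simp
      linarith
    · have h1 : Tendsto (fun n : ℕ => 1 / Real.sqrt n) atTop (nhds 0) := by
        simpa [one_div, Function.comp_def] using tendsto_inv_atTop_zero.comp DFM.sqrtN_atTop
      have h2 := h1.const_mul (1 / (L * Real.log 2))
      rw [mul_zero] at h2
      exact h2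
  · -- condition 2
    filter_upwards [hθ] with n hn
    obtain ⟨_, _, _, h4, _, _⟩ := key n hn.1 hn.2.1 hn.2.2.1
    exact h4
  · -- condition 3
    filter_upwards [hθ] with n hn
    obtain ⟨harg, hT, hφ0, hφle, hφle', hx0⟩ := key n hn.1 hn.2.1 hn.2.2.1
    have hn0 : (0:ℝ) < n := by linarith [hn.2.2.1]
    obtain ⟨m, hmdef⟩ : ∃ m : ℕ, m = (⌊(1 - β) * (n:ℝ) - φ n⌋).toNat := ⟨_, rfl⟩
    rw [← hmdef]
    have hzfl : (0:ℤ) ≤ ⌊(1 - β) * (n:ℝ) - φ n⌋ := Int.floor_nonneg.2 hx0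
    have hmcast : ((m:ℤ):ℝ) = ((⌊(1 - β) * (n:ℝ) - φ n⌋ : ℤ) : ℝ) := by
      rw [hmdef, Int.toNat_of_nonneg hzfl]
    push_cast at hmcast
    have hm_le : (m:ℝ) ≤ (1 - β) * (n:ℝ) - φ n := by
      have := Int.floor_le ((1 - β) * (n:ℝ) - φ n)
      linarith
    have hβn0 : 0 ≤ β * (n:ℝ) := by positivity
    have hmn : m ≤ n := by
      have hr : (m:ℝ) ≤ (n:ℝ) := by linarith
      exact_mod_cast hr
    have hp0 : (0:ℝ) < (2:ℝ) ^ (-(β * (n:ℝ))) := Real.rpow_pos_of_pos two_pos _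
    have hp1 : (2:ℝ) ^ (-(β * (n:ℝ))) ≤ 1 :=
      Real.rpow_le_one_of_one_le_of_nonpos one_le_two (by linarith)
    refine (DFM.expectation_le _ hp0.le hp1).trans ?_
    have hkey : (1 - (2:ℝ) ^ (-(β * (n:ℝ))))^(2^(n-m) - 1) ≤ Real.exp (-(2:ℝ) ^ (φ n)) := by
      obtain ⟨p, hpdef⟩ : ∃ p : ℝ, p = (2:ℝ) ^ (-(β * (n:ℝ))) := ⟨_, rfl⟩
      rw [← hpdef]
      have hp0' : 0 < p := hpdef ▸ hp0
      have hp1' : p ≤ 1 := hpdef ▸ hp1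
      have hq := DFM.one_sub_le_exp_quad hp0'.le hp1'
      calc (1 - p)^(2^(n-m) - 1) ≤ (Real.exp (-(p + p^2/2)))^(2^(n-m) - 1) :=
            pow_le_pow_left₀ (by linarith) hq _
        _ = Real.exp (((2^(n-m) - 1 : ℕ):ℝ) * -(p + p^2/2)) := by
            rw [Real.exp_nat_mul]
        _ ≤ Real.exp (-(2:ℝ) ^ (φ n)) := by
            apply Real.exp_le_exp.mpr
            have hNcast : ((2^(n-m) - 1 : ℕ):ℝ) = (2:ℝ)^(((n-m:ℕ)):ℝ) - 1 := by
              rw [Nat.cast_sub (Nat.one_le_two_pow), Real.rpow_natCast]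
              push_cast
              ring
            rw [hNcast]
            have hKp : (2:ℝ)^(((n-m:ℕ)):ℝ) * p = (2:ℝ)^((((n-m:ℕ)):ℝ) - β * (n:ℝ)) := by
              rw [hpdef, ← Real.rpow_add two_pos]
              congr 1
            have hTle : (2:ℝ) ^ (φ n) ≤ (2:ℝ)^(((n-m:ℕ)):ℝ) * p := by
              rw [hKp]
              apply Real.rpow_le_rpow_of_exponent_le one_le_two
              rw [Nat.cast_sub hmn]
              linarith
            have hT3 : 3 ≤ (2:ℝ) ^ (φ n) := by
              rw [hT]
              nlinarith [mul_nonneg hn0.le hL0.le, hn.1]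
            obtain ⟨K, hKdef⟩ : ∃ K : ℝ, K = (2:ℝ)^(((n-m:ℕ)):ℝ) := ⟨_, rfl⟩
            rw [← hKdef] at hTle ⊢
            have h2 : 2 ≤ (K - 1) * p := by nlinarith
            nlinarith [mul_le_mul_of_nonneg_right h2 hp0'.le]
    calc ((n.choose m : ℝ≥0∞)) * ENNReal.ofReal (1 - (2:ℝ) ^ (-(β * (n:ℝ)))) ^ (2^(n-m) - 1)
        = ENNReal.ofReal ((n.choose m : ℝ) *
            (1 - (2:ℝ) ^ (-(β * (n:ℝ))))^(2^(n-m) - 1)) := by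
          rw [ENNReal.ofReal_mul (Nat.cast_nonneg _), ENNReal.ofReal_natCast,
            ENNReal.ofReal_pow (by linarith)]
      _ ≤ ENNReal.ofReal ((n.choose m : ℝ) * Real.exp (-(2:ℝ) ^ (φ n))) :=
          ENNReal.ofReal_le_ofReal (mul_le_mul_of_nonneg_left hkey (Nat.cast_nonneg _))
  · -- condition 4
    refine squeeze_zero' (g := fun n : ℕ => Real.exp (-(Real.sqrt n / 2))) ?_ ?_ ?_
    · exact Eventually.of_forall fun n => by positivity
    · filter_upwards [hθ] with n hn
      obtain ⟨harg, hT, hφ0, hφle, hφle', hx0⟩ := key n hn.1 hn.2.1 hn.2.2.1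
      have hn0 : (0:ℝ) < n := by linarith [hn.2.2.1]
      obtain ⟨m, hmdef⟩ : ∃ m : ℕ, m = (⌊(1 - β) * (n:ℝ) - φ n⌋).toNat := ⟨_, rfl⟩
      rw [← hmdef]
      have hzfl : (0:ℤ) ≤ ⌊(1 - β) * (n:ℝ) - φ n⌋ := Int.floor_nonneg.2 hx0
      have hmcast : ((m:ℤ):ℝ) = ((⌊(1 - β) * (n:ℝ) - φ n⌋ : ℤ) : ℝ) := by
        rw [hmdef, Int.toNat_of_nonneg hzfl]
      push_cast at hmcast
      have hm_le : (m:ℝ) ≤ (1 - β) * (n:ℝ) - φ n := by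
        have := Int.floor_le ((1 - β) * (n:ℝ) - φ n)
        linarith
      have hm_gt : (1 - β) * (n:ℝ) - φ n - 1 < (m:ℝ) := by
        have := Int.sub_one_lt_floor ((1 - β) * (n:ℝ) - φ n)
        linarith
      have hβn0 : 0 ≤ β * (n:ℝ) := by positivity
      have hmn : m ≤ n := by
        have hr : (m:ℝ) ≤ (n:ℝ) := by linarith
        exact_mod_cast hr
      -- binomial bound
      obtain ⟨a, hadef⟩ : ∃ a : ℝ, a = Real.log (1 - β) := ⟨_, rfl⟩
      obtain ⟨b, hbdef⟩ : ∃ b : ℝ, b = Real.log β := ⟨_, rfl⟩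
      have hpow1 : ((1-β):ℝ)^m = Real.exp ((m:ℝ) * a) := by
        rw [Real.exp_nat_mul, hadef, Real.exp_log hβ']
      have hpow2 : (β:ℝ)^(n-m) = Real.exp (((n-m:ℕ):ℝ) * b) := by
        rw [Real.exp_nat_mul, hbdef, Real.exp_log hβ0]
      have hbin := DFM.binom_bound hmn (x := (1:ℝ)-β) (y := β) hβ'.le hβ0.le
      rw [show ((1:ℝ)-β) + β = 1 by ring, one_pow, hpow1, hpow2] at hbin
      have hch : (n.choose m : ℝ) ≤ Real.exp (-((m:ℝ) * a + ((n-m:ℕ):ℝ) * b)) := by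
        rw [Real.exp_neg, ← one_div, le_div_iff₀ (Real.exp_pos _), Real.exp_add]
        calc (n.choose m : ℝ) * (Real.exp ((m:ℝ)*a) * Real.exp (((n-m:ℕ):ℝ)*b))
            = (n.choose m : ℝ) * Real.exp ((m:ℝ)*a) * Real.exp (((n-m:ℕ):ℝ)*b) := by ring
          _ ≤ 1 := hbin
      -- now bound the whole term
      have hbound : (n.choose m : ℝ) * Real.exp (-(2:ℝ) ^ (φ n))
          ≤ Real.exp (-((m:ℝ) * a + ((n-m:ℕ):ℝ) * b) + -((n:ℝ) * L + Real.sqrt n)) := by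
        rw [Real.exp_add, hT]
        exact mul_le_mul_of_nonneg_right hch (Real.exp_pos _).le
      have hE : -((m:ℝ) * a + ((n-m:ℕ):ℝ) * b) + -((n:ℝ) * L + Real.sqrt n)
          = ((1-β) * (n:ℝ) - m) * (a - b) - Real.sqrt n := by
        rw [Nat.cast_sub hmn, hLval, hadef, hbdef]
        ring
      -- the key estimate: s * (a - b) ≤ √n / 2
      have hu : Real.sqrt (Real.sqrt n) * Real.sqrt (Real.sqrt n) = Real.sqrt n :=
        Real.mul_self_sqrt (Real.sqrt_nonneg _)
      have hu1 : (1:ℝ) ≤ Real.sqrt (Real.sqrt n) := le_trans (le_max_left _ _) hn.2.2.2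
      have huR : 2*(4/Real.log 2 + 1)*R ≤ Real.sqrt (Real.sqrt n) :=
        le_trans (le_max_right _ _) hn.2.2.2
      have hu0 : (0:ℝ) < Real.sqrt (Real.sqrt n) := by linarith
      have hR0 : 0 ≤ R := hRdef ▸ abs_nonneg _
      have hlogu : Real.log (Real.sqrt (Real.sqrt n)) = Real.log n / 4 := by
        rw [Real.log_sqrt (Real.sqrt_nonneg _), Real.log_sqrt hn0.le]
        ring
      have hlogn4 : Real.log n ≤ 4 * Real.sqrt (Real.sqrt n) - 4 := by
        have := Real.log_le_sub_one_of_pos hu0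
        rw [hlogu] at this
        linarith
      have hlogbu : Real.logb 2 (n:ℝ) + 1 ≤ Real.sqrt (Real.sqrt n) * (4/Real.log 2 + 1) := by
        have h1 : Real.logb 2 (n:ℝ) ≤ (4 * Real.sqrt (Real.sqrt n) - 4)/Real.log 2 := by
          rw [Real.logb]
          gcongr
        have h2 : (4 * Real.sqrt (Real.sqrt n) - 4)/Real.log 2
            ≤ 4 * Real.sqrt (Real.sqrt n)/Real.log 2 := by gcongr <;> linarith
        have h4 : 4 * Real.sqrt (Real.sqrt n)/Real.log 2 + Real.sqrt (Real.sqrt n)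
            = Real.sqrt (Real.sqrt n) * (4/Real.log 2 + 1) := by ring
        linarith
      have hs0 : 0 ≤ (1-β) * (n:ℝ) - m := by linarith
      have hsle : (1-β) * (n:ℝ) - m ≤ Real.logb 2 (n:ℝ) + 1 := by linarith
      have hab : a - b ≤ R := by
        rw [hRdef, hadef, hbdef, ← Real.log_div hβ'.ne' hβ0.ne']
        exact le_abs_self _
      have hkey2 : ((1-β) * (n:ℝ) - m) * (a - b) ≤ Real.sqrt n / 2 := by
        calc ((1-β) * (n:ℝ) - m) * (a - b) ≤ ((1-β) * (n:ℝ) - m) * R :=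
              mul_le_mul_of_nonneg_left hab hs0
          _ ≤ (Real.logb 2 (n:ℝ) + 1) * R := mul_le_mul_of_nonneg_right hsle hR0
          _ ≤ (Real.sqrt (Real.sqrt n) * (4/Real.log 2 + 1)) * R :=
              mul_le_mul_of_nonneg_right hlogbu hR0
          _ = Real.sqrt (Real.sqrt n) * ((4/Real.log 2 + 1) * R) := by ring
          _ ≤ Real.sqrt (Real.sqrt n) * (Real.sqrt (Real.sqrt n) / 2) := by
              apply mul_le_mul_of_nonneg_left _ hu0.le
              linarith
          _ = Real.sqrt n / 2 := by
              rw [show Real.sqrt (Real.sqrt n) * (Real.sqrt (Real.sqrt n)/2)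
                = (Real.sqrt (Real.sqrt n) * Real.sqrt (Real.sqrt n))/2 from by ring, hu]
      calc (n.choose m : ℝ) * Real.exp (-(2:ℝ) ^ (φ n))
          ≤ Real.exp (((1-β) * (n:ℝ) - m) * (a - b) - Real.sqrt n) := by
            rw [← hE]; exact hbound
        _ ≤ Real.exp (-(Real.sqrt n / 2)) := by
            apply Real.exp_le_exp.mpr
            linarith
    · have h1 : Tendsto (fun n : ℕ => Real.sqrt n / 2) atTop atTop :=
        DFM.sqrtN_atTop.atTop_div_const two_pos
      exact Real.tendsto_exp_atBot.comp (tendsto_neg_atTop_atBot.comp h1)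
end
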